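/- There exists a constant C ≥ 1, depending only on β, γ, ε, such that every differentiable function m : [0,∞) → ℝ² satisfying m'(t) = m(t)A for all t ≥ 0 obeys ‖m(t)‖ ≤ C e^{-ν₁ t} ‖m(0)‖ for all t ≥ 0; in particular m(t) → (0,0) as t → ∞. -/

import Mathlib

open Filter

lemma exp_sol (lam : ℝ) (f : ℝ → ℝ)
    (hf : ∀ t, 0 ≤ t → HasDerivAt f (-(lam * f t)) t) :
    ∀ t, 0 ≤ t → f t = f 0 * Real.exp (-(lam * t)) := by
  intro t ht
  have key := constant_of_has_deriv_right_zero
    (f := fun x => f x * Real.exp (lam * x)) (a := 0) (b := t)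
    (fun y hy => ((hf y hy.1).mul
      (((hasDerivAt_id y).const_mul lam).exp)).continuousAt.continuousWithinAt)
    (fun y hy => by
      have h : HasDerivAt (fun x => f x * Real.exp (lam * x)) 0 y := by
        have := (hf y hy.1).mul (((hasDerivAt_id y).const_mul lam).exp)
        refine this.congr_deriv ?_
        symm
        simp [mul_comm]
        ring
      exact h.hasDerivWithinAt)
  have h2 := key t ⟨ht, le_refl t⟩
  simp only [mul_zero, Real.exp_zero, mul_one] at h2
  rw [Real.exp_neg]
  field_simp
  linarith [h2]

set_option maxHeartbeats 2000000 in
/-- uniform exponential decay at rate `ν₁` (with a constant `C`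
depending only on `β, γ, ε`) for all solutions of `m'(t) = m(t)A`, where
`A = [[0, -ε], [β, -γβ]]` acts on row vectors; in particular `m(t) → (0,0)`. -/
theorem stmt_9 (β γ ε : ℝ) (hβ : 0 < β) (hγ : 0 < γ) (hε : 0 < ε)
    (hεbound : ε < γ ^ 2 * β / 4) :
    let ν₁ : ℝ := (γ * β - Real.sqrt (γ ^ 2 * β ^ 2 - 4 * ε * β)) / 2
    ∃ C : ℝ, 1 ≤ C ∧
      ∀ m₁ m₂ : ℝ → ℝ,
        (∀ t : ℝ, 0 ≤ t →
          HasDerivAt m₁ (β * m₂ t) t ∧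
          HasDerivAt m₂ (-(ε * m₁ t) - γ * β * m₂ t) t) →
        (∀ t : ℝ, 0 ≤ t →
          Real.sqrt ((m₁ t) ^ 2 + (m₂ t) ^ 2) ≤
            C * Real.exp (-ν₁ * t) * Real.sqrt ((m₁ 0) ^ 2 + (m₂ 0) ^ 2)) ∧
        Tendsto (fun t => (m₁ t, m₂ t)) atTop (nhds ((0 : ℝ), (0 : ℝ))) := by
  intro ν₁
  set s : ℝ := Real.sqrt (γ ^ 2 * β ^ 2 - 4 * ε * β) with hs_def
  have hD : 0 < γ ^ 2 * β ^ 2 - 4 * ε * β := by nlinarith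
  have hs : 0 < s := Real.sqrt_pos.2 hD
  have hs2 : s ^ 2 = γ ^ 2 * β ^ 2 - 4 * ε * β := Real.sq_sqrt hD.le
  have hsγβ : s < γ * β := by nlinarith [sq_nonneg (s - γ * β)]
  have hν₁def : ν₁ = (γ * β - s) / 2 := rfl
  have hν₁ : 0 < ν₁ := by rw [hν₁def]; linarith
  set a₁ : ℝ := (γ * β - s) / (2 * β) with ha₁
  set a₂ : ℝ := (γ * β + s) / (2 * β) with ha₂
  set ν₂ : ℝ := (γ * β + s) / 2 with hν₂def
  have hν₁ν₂ : ν₁ ≤ ν₂ := by rw [hν₁def, hν₂def]; linarith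
  have ha₁pos : 0 < a₁ := by rw [ha₁]; apply div_pos (by linarith) (by linarith)
  have ha₂pos : 0 < a₂ := by rw [ha₂]; apply div_pos (by linarith) (by linarith)
  have ha₂₁ : a₂ - a₁ = s / β := by rw [ha₁, ha₂]; field_simp; ring
  set K : ℝ := 2 * (β / s) * (1 + a₁) * (1 + a₂) with hK
  have hKpos : 0 < K := by positivity
  clear_value s a₁ a₂ ν₂ K ν₁
  refine ⟨2 * K + 1, by linarith, fun m₁ m₂ hm => ?_⟩
  -- decoupled variables
  have hu₁ : ∀ t, 0 ≤ t →
      m₂ t + a₁ * m₁ t = (m₂ 0 + a₁ * m₁ 0) * Real.exp (-(ν₂ * t)) := by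
    apply exp_sol ν₂ (fun t => m₂ t + a₁ * m₁ t)
    intro t ht
    have h := ((hm t ht).2).add ((hm t ht).1.const_mul a₁)
    refine h.congr_deriv ?_
    symm
    rw [hν₂def, ha₁]
    field_simp
    linear_combination (m₁ t) * hs2
  have hu₂ : ∀ t, 0 ≤ t →
      m₂ t + a₂ * m₁ t = (m₂ 0 + a₂ * m₁ 0) * Real.exp (-(ν₁ * t)) := by
    apply exp_sol ν₁ (fun t => m₂ t + a₂ * m₁ t)
    intro t ht
    have h := ((hm t ht).2).add ((hm t ht).1.const_mul a₂)
    refine h.congr_deriv ?_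
    symm
    rw [hν₁def, ha₂]
    field_simp
    linear_combination (m₁ t) * hs2
  set M : ℝ := |m₁ 0| + |m₂ 0| with hM
  have hMnn : 0 ≤ M := by positivity
  clear_value M
  have hbound : ∀ t, 0 ≤ t →
      |m₁ t| + |m₂ t| ≤ K * Real.exp (-ν₁ * t) * M := by
    intro t ht
    have e2le1 : Real.exp (-(ν₂ * t)) ≤ Real.exp (-(ν₁ * t)) := by
      apply Real.exp_le_exp.2; nlinarith
    have hepos : (0:ℝ) < Real.exp (-(ν₁ * t)) := Real.exp_pos _
    have hb1 : |m₂ t + a₁ * m₁ t| ≤ (1 + a₁) * M * Real.exp (-(ν₁ * t)) := by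
      rw [hu₁ t ht, abs_mul, Real.abs_exp]
      have h1 : |m₂ 0 + a₁ * m₁ 0| ≤ (1 + a₁) * M := by
        calc |m₂ 0 + a₁ * m₁ 0| ≤ |m₂ 0| + |a₁ * m₁ 0| := abs_add_le _ _
        _ ≤ (1 + a₁) * M := by
            rw [abs_mul, abs_of_pos ha₁pos, hM]
            nlinarith [abs_nonneg (m₁ 0), abs_nonneg (m₂ 0)]
      calc |m₂ 0 + a₁ * m₁ 0| * Real.exp (-(ν₂ * t))
          ≤ |m₂ 0 + a₁ * m₁ 0| * Real.exp (-(ν₁ * t)) :=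
            mul_le_mul_of_nonneg_left e2le1 (abs_nonneg _)
        _ ≤ (1 + a₁) * M * Real.exp (-(ν₁ * t)) :=
            mul_le_mul_of_nonneg_right h1 hepos.le
    have hb2 : |m₂ t + a₂ * m₁ t| ≤ (1 + a₂) * M * Real.exp (-(ν₁ * t)) := by
      rw [hu₂ t ht, abs_mul, Real.abs_exp]
      apply mul_le_mul_of_nonneg_right _ hepos.le
      calc |m₂ 0 + a₂ * m₁ 0| ≤ |m₂ 0| + |a₂ * m₁ 0| := abs_add_le _ _
      _ ≤ (1 + a₂) * M := by
          rw [abs_mul, abs_of_pos ha₂pos, hM]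
          nlinarith [abs_nonneg (m₁ 0), abs_nonneg (m₂ 0)]
    have hcalc : (β / s) * (s / β) = 1 := by
      rw [div_mul_div_comm, mul_comm, div_self (by positivity)]
    have hm₁ : m₁ t = (β / s) * ((m₂ t + a₂ * m₁ t) - (m₂ t + a₁ * m₁ t)) := by
      have e : (m₂ t + a₂ * m₁ t) - (m₂ t + a₁ * m₁ t) = (a₂ - a₁) * m₁ t := by ring
      rw [e, ha₂₁, ← mul_assoc, hcalc, one_mul]
    have hm₂ : m₂ t = (β / s) * (a₂ * (m₂ t + a₁ * m₁ t) - a₁ * (m₂ t + a₂ * m₁ t)) := by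
      have e : a₂ * (m₂ t + a₁ * m₁ t) - a₁ * (m₂ t + a₂ * m₁ t) = (a₂ - a₁) * m₂ t := by ring
      rw [e, ha₂₁, ← mul_assoc, hcalc, one_mul]
    have hβs : 0 < β / s := by positivity
    have h1 : |m₁ t| ≤ (β / s) * ((1 + a₂) * M * Real.exp (-(ν₁ * t)) + (1 + a₁) * M * Real.exp (-(ν₁ * t))) := by
      rw [hm₁, abs_mul, abs_of_pos hβs]
      apply mul_le_mul_of_nonneg_left _ hβs.le
      calc |(m₂ t + a₂ * m₁ t) - (m₂ t + a₁ * m₁ t)|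
          ≤ |m₂ t + a₂ * m₁ t| + |m₂ t + a₁ * m₁ t| := abs_sub _ _
      _ ≤ _ := add_le_add hb2 hb1
    have h2 : |m₂ t| ≤ (β / s) * (a₂ * ((1 + a₁) * M * Real.exp (-(ν₁ * t))) + a₁ * ((1 + a₂) * M * Real.exp (-(ν₁ * t)))) := by
      rw [hm₂, abs_mul, abs_of_pos hβs]
      apply mul_le_mul_of_nonneg_left _ hβs.le
      calc |a₂ * (m₂ t + a₁ * m₁ t) - a₁ * (m₂ t + a₂ * m₁ t)|
          ≤ |a₂ * (m₂ t + a₁ * m₁ t)| + |a₁ * (m₂ t + a₂ * m₁ t)| := abs_sub _ _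
      _ = a₂ * |m₂ t + a₁ * m₁ t| + a₁ * |m₂ t + a₂ * m₁ t| := by
          rw [abs_mul, abs_mul, abs_of_pos ha₁pos, abs_of_pos ha₂pos]
      _ ≤ _ := add_le_add (mul_le_mul_of_nonneg_left hb1 ha₂pos.le)
            (mul_le_mul_of_nonneg_left hb2 ha₁pos.le)
    have hne : -ν₁ * t = -(ν₁ * t) := by ring
    rw [hne]
    calc |m₁ t| + |m₂ t| ≤ _ := add_le_add h1 h2
    _ = K * Real.exp (-(ν₁ * t)) * M := by rw [hK]; ring
  have habs1 : ∀ x y : ℝ, Real.sqrt (x ^ 2 + y ^ 2) ≤ |x| + |y| := by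
    intro x y
    have h := Real.sqrt_le_sqrt (show x ^ 2 + y ^ 2 ≤ (|x| + |y|) ^ 2 by
      nlinarith [abs_nonneg x, abs_nonneg y, sq_abs x, sq_abs y])
    rwa [Real.sqrt_sq (by positivity)] at h
  have habs2 : M ≤ 2 * Real.sqrt ((m₁ 0) ^ 2 + (m₂ 0) ^ 2) := by
    rw [hM]
    have h1 : |m₁ 0| ≤ Real.sqrt ((m₁ 0) ^ 2 + (m₂ 0) ^ 2) :=
      Real.abs_le_sqrt (by nlinarith [sq_nonneg (m₂ 0)])
    have h2 : |m₂ 0| ≤ Real.sqrt ((m₁ 0) ^ 2 + (m₂ 0) ^ 2) :=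
      Real.abs_le_sqrt (by nlinarith [sq_nonneg (m₁ 0)])
    linarith
  constructor
  · intro t ht
    have hepos : (0:ℝ) < Real.exp (-ν₁ * t) := Real.exp_pos _
    have hsq0 : (0:ℝ) ≤ Real.sqrt ((m₁ 0) ^ 2 + (m₂ 0) ^ 2) := Real.sqrt_nonneg _
    calc Real.sqrt ((m₁ t) ^ 2 + (m₂ t) ^ 2) ≤ |m₁ t| + |m₂ t| := habs1 _ _
    _ ≤ K * Real.exp (-ν₁ * t) * M := hbound t ht
    _ ≤ K * Real.exp (-ν₁ * t) * (2 * Real.sqrt ((m₁ 0) ^ 2 + (m₂ 0) ^ 2)) := by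
        apply mul_le_mul_of_nonneg_left habs2 (by positivity)
    _ ≤ (2 * K + 1) * Real.exp (-ν₁ * t) * Real.sqrt ((m₁ 0) ^ 2 + (m₂ 0) ^ 2) := by
        nlinarith [hepos, hsq0, hKpos]
  · have hg : Tendsto (fun t => K * Real.exp (-ν₁ * t) * M) atTop (nhds 0) := by
      have h1 : Tendsto (fun t : ℝ => ν₁ * t) atTop atTop :=
        Tendsto.const_mul_atTop hν₁ tendsto_id
      have h2 : Tendsto (fun t : ℝ => Real.exp (-ν₁ * t)) atTop (nhds 0) := by
        have := Real.tendsto_exp_atBot.comp (tendsto_neg_atTop_atBot.comp h1)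
        simpa [Function.comp_def, neg_mul] using this
      have := (h2.const_mul K).mul_const M
      simpa using this
    have hm1 : Tendsto m₁ atTop (nhds 0) := by
      apply squeeze_zero_norm' _ hg
      filter_upwards [eventually_ge_atTop (0:ℝ)] with t ht
      have := hbound t ht
      have h2 : |m₂ t| ≥ 0 := abs_nonneg _
      simp only [Real.norm_eq_abs]
      linarith
    have hm2 : Tendsto m₂ atTop (nhds 0) := by
      apply squeeze_zero_norm' _ hg
      filter_upwards [eventually_ge_atTop (0:ℝ)] with t ht
      have := hbound t ht
      have h2 : |m₁ t| ≥ 0 := abs_nonneg _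
      simp only [Real.norm_eq_abs]
      linarith
    exact hm1.prodMk_nhds hm2
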